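/- Let (X_n, F_n)_{n∈ℕ} be an adapted sequence of real random variables that is almost surely bounded by a constant K (|X_n| ≤ K a.s. for all n), and let (τ_m)_{m∈ℕ} be a sequence of stopping times with respect to (F_n)_{n∈ℕ} such that for every m and every sample point ω, either τ_m(ω) < τ_{m+1}(ω) or τ_m(ω) = τ_{m+1}(ω) = +∞. For each m define Y_m := X_{τ_m + 1} − E[X_{τ_m + 1} | F_{τ_m}] and G_m := F_{τ_{m+1}}. Then (G_m)_{m∈ℕ} is a filtration, each Y_m is G_m-measurable and integrable (indeed almost surely bounded), and E[Y_{m+1} | G_m] = 0 almost surely for all m; that is, (Y_m, G_m)_{m∈ℕ} is a martingale difference sequence. -/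

import Mathlib

open MeasureTheory

/-- The value of the process `X` at the (possibly infinite) random time `τ`, with the
convention `X_∞ := 0`. -/
noncomputable def stoppedVal {Ω : Type*} (X : ℕ → Ω → ℝ) (τ : Ω → ℕ∞) (ω : Ω) : ℝ :=
  if h : τ ω ≠ ⊤ then X ((τ ω).untop h) ω else 0

/-- The σ-algebra at the (possibly infinite) stopping time `τ`:
events `A` (measurable in the ambient σ-algebra) such that `A ∩ {τ = n} ∈ F n` for all `n`. -/
def sigmaAt {Ω : Type*} (m0 : MeasurableSpace Ω) (F : Filtration ℕ m0)
    (τ : Ω → ℕ∞) (hτ : ∀ n : ℕ, MeasurableSet[F n] {ω | τ ω = (n : ℕ∞)}) :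
    MeasurableSpace Ω where
  MeasurableSet' A := MeasurableSet[m0] A ∧
    ∀ n : ℕ, MeasurableSet[F n] (A ∩ {ω | τ ω = (n : ℕ∞)})
  measurableSet_empty :=
    ⟨MeasurableSet.empty, fun n => by simp⟩
  measurableSet_compl := fun A hA => by
    refine ⟨hA.1.compl, fun n => ?_⟩
    have hset : Aᶜ ∩ {ω | τ ω = (n : ℕ∞)} =
        {ω | τ ω = (n : ℕ∞)} \ (A ∩ {ω | τ ω = (n : ℕ∞)}) := by
      ext ω
      simp only [Set.mem_inter_iff, Set.mem_compl_iff, Set.mem_diff, Set.mem_setOf_eq]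
      tauto
    rw [hset]
    exact (hτ n).diff (hA.2 n)
  measurableSet_iUnion := fun s hs => by
    refine ⟨MeasurableSet.iUnion fun i => (hs i).1, fun n => ?_⟩
    rw [Set.iUnion_inter]
    exact MeasurableSet.iUnion fun i => (hs i).2 n

section helpers
variable {Ω : Type*} {m0 : MeasurableSpace Ω} (F : Filtration ℕ m0)

lemma sigmaAt_le (τ : Ω → ℕ∞) (hτ : ∀ n : ℕ, MeasurableSet[F n] {ω | τ ω = (n : ℕ∞)}) :
    sigmaAt m0 F τ hτ ≤ m0 := fun _ hA => hA.1

lemma sigmaAt_mono {σ τ : Ω → ℕ∞}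
    (hσ : ∀ n : ℕ, MeasurableSet[F n] {ω | σ ω = (n : ℕ∞)})
    (hτ : ∀ n : ℕ, MeasurableSet[F n] {ω | τ ω = (n : ℕ∞)})
    (hle : ∀ ω, σ ω ≤ τ ω) :
    sigmaAt m0 F σ hσ ≤ sigmaAt m0 F τ hτ := by
  intro A hA
  refine ⟨hA.1, fun n => ?_⟩
  have hset : A ∩ {ω | τ ω = (n : ℕ∞)} =
      ⋃ k ∈ Finset.range (n + 1), (A ∩ {ω | σ ω = (k : ℕ∞)}) ∩ {ω | τ ω = (n : ℕ∞)} := by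
    ext ω
    simp only [Set.mem_inter_iff, Set.mem_setOf_eq, Set.mem_iUnion, Finset.mem_range,
      exists_prop]
    constructor
    · rintro ⟨hAω, hτω⟩
      have h1 : σ ω ≤ (n : ℕ∞) := (hle ω).trans hτω.le
      have h2 : σ ω ≠ ⊤ := fun h => by simp [h] at h1
      obtain ⟨k, hk⟩ := WithTop.ne_top_iff_exists.1 h2
      have hkn : k ≤ n := by rw [← hk] at h1; exact Nat.cast_le.mp h1
      exact ⟨k, Nat.lt_succ_of_le hkn, ⟨hAω, hk.symm⟩, hτω⟩
    · rintro ⟨k, _, ⟨hAω, _⟩, hτω⟩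
      exact ⟨hAω, hτω⟩
  rw [hset]
  refine MeasurableSet.biUnion (Finset.range (n + 1)).countable_toSet fun k hk => ?_
  exact (F.mono (Nat.lt_succ_iff.1 (Finset.mem_range.1 hk)) _ (hA.2 k)).inter (hτ n)

lemma measurable_stoppedVal (X : ℕ → Ω → ℝ) (hadapt : Adapted F X)
    (τ : Ω → ℕ∞) (hτ : ∀ n : ℕ, MeasurableSet[F n] {ω | τ ω = (n : ℕ∞)}) :
    Measurable[sigmaAt m0 F τ hτ] (stoppedVal X τ) := by
  intro B hB
  have hXm : ∀ n, Measurable[m0] (X n) := fun n =>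
    (hadapt n).mono (F.le n) le_rfl
  have hτn : ∀ n : ℕ, MeasurableSet[m0] {ω | τ ω = (n : ℕ∞)} := fun n => F.le n _ (hτ n)
  have hτtop : MeasurableSet[m0] {ω | τ ω = ⊤} := by
    have : {ω | τ ω = ⊤} = (⋃ n : ℕ, {ω | τ ω = (n : ℕ∞)})ᶜ := by
      ext ω
      simp only [Set.mem_compl_iff, Set.mem_iUnion, Set.mem_setOf_eq, not_exists]
      constructor
      · intro h n hn; rw [h] at hn; exact (by simp : ((n : ℕ∞)) ≠ ⊤) hn.symm
      · intro h
        by_contra htop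
        obtain ⟨k, hk⟩ := WithTop.ne_top_iff_exists.1 htop
        exact h k hk.symm
    rw [this]
    exact (MeasurableSet.iUnion hτn).compl
  have hset : stoppedVal X τ ⁻¹' B =
      (⋃ n : ℕ, X n ⁻¹' B ∩ {ω | τ ω = (n : ℕ∞)}) ∪
        ({ω | τ ω = ⊤} ∩ {_ω : Ω | (0 : ℝ) ∈ B}) := by
    ext ω
    by_cases h : τ ω = ⊤
    · have hval : stoppedVal X τ ω = 0 := by simp [stoppedVal, h]
      simp only [Set.mem_preimage, hval, Set.mem_union, Set.mem_iUnion, Set.mem_inter_iff,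
        Set.mem_setOf_eq]
      constructor
      · intro h0; exact Or.inr ⟨h, h0⟩
      · rintro (⟨n, _, hn⟩ | ⟨_, h0⟩)
        · exact absurd hn (by simp [h])
        · exact h0
    · obtain ⟨k, hk⟩ := WithTop.ne_top_iff_exists.1 h
      have hval : stoppedVal X τ ω = X k ω := by
        simp only [stoppedVal, dif_pos h]
        congr 1
        exact (WithTop.untop_eq_iff h).2 hk.symm
      simp only [Set.mem_preimage, hval, Set.mem_union, Set.mem_iUnion, Set.mem_inter_iff,
        Set.mem_setOf_eq]
      constructor
      · intro h0; exact Or.inl ⟨k, h0, hk.symm⟩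
      · rintro (⟨n, hn, hn'⟩ | ⟨htop, _⟩)
        · have : n = k := (Nat.cast_inj.mp (hk.trans hn')).symm
          rwa [← this]
        · exact absurd htop h
  constructor
  · rw [hset]
    refine MeasurableSet.union (MeasurableSet.iUnion fun n => (hXm n hB).inter (hτn n)) ?_
    by_cases h0 : (0 : ℝ) ∈ B
    · simpa [h0] using hτtop
    · simp [h0]
  · intro n
    have : stoppedVal X τ ⁻¹' B ∩ {ω | τ ω = (n : ℕ∞)} =
        X n ⁻¹' B ∩ {ω | τ ω = (n : ℕ∞)} := by
      ext ω
      simp only [Set.mem_inter_iff, Set.mem_preimage, Set.mem_setOf_eq,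
        and_congr_left_iff]
      intro hn
      have hval : stoppedVal X τ ω = X n ω := by
        have h : τ ω ≠ ⊤ := by simp [hn]
        simp only [stoppedVal, dif_pos h]
        congr 1
        exact (WithTop.untop_eq_iff h).2 hn
      rw [hval]
    rw [this]
    exact ((hadapt n) hB).inter (hτ n)

lemma hτ_add_one (τ : Ω → ℕ∞) (hτ : ∀ n : ℕ, MeasurableSet[F n] {ω | τ ω = (n : ℕ∞)})
    (n : ℕ) : MeasurableSet[F n] {ω | τ ω + 1 = (n : ℕ∞)} := by
  cases n with
  | zero =>
    have : {ω | τ ω + 1 = ((0 : ℕ) : ℕ∞)} = ∅ := by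
      ext ω; simp [add_eq_zero]
    rw [this]; exact @MeasurableSet.empty Ω (F 0)
  | succ k =>
    have : {ω | τ ω + 1 = ((k + 1 : ℕ) : ℕ∞)} = {ω | τ ω = (k : ℕ∞)} := by
      ext ω
      simp only [Set.mem_setOf_eq, Nat.cast_add, Nat.cast_one]
      exact WithTop.add_right_inj (by simp : (1 : ℕ∞) ≠ ⊤)
    rw [this]
    exact F.mono (Nat.le_succ k) _ (hτ k)

end helpers

/-- **Optional skipping produces a martingale difference sequence (Lemma 6).**
Given an adapted sequence `(X n, F n)` a.s. bounded by `K` and a strictly increasing sequence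
of stopping times `(τ m)`, the sequence `Y m := X (τ m + 1) - E[X (τ m + 1) | F (τ m)]`
together with `G m := F (τ (m+1))` is a martingale difference sequence: `G` is a filtration,
each `Y m` is `G m`-measurable, integrable (indeed a.s. bounded), and
`E[Y (m+1) | G m] = 0` a.s. -/
theorem stmt_4 {Ω : Type*} {m0 : MeasurableSpace Ω} {μ : Measure Ω} [IsProbabilityMeasure μ]
    (F : Filtration ℕ m0) (X : ℕ → Ω → ℝ) (K : ℝ)
    (hadapt : Adapted F X)
    (hbdd : ∀ n, ∀ᵐ ω ∂μ, |X n ω| ≤ K)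
    (τ : ℕ → Ω → ℕ∞)
    (hτ : ∀ m n : ℕ, MeasurableSet[F n] {ω | τ m ω = (n : ℕ∞)})
    (hincr : ∀ m ω, τ m ω < τ (m + 1) ω ∨ (τ m ω = ⊤ ∧ τ (m + 1) ω = ⊤))
    (Y : ℕ → Ω → ℝ)
    (hY : ∀ m, Y m = fun ω =>
      stoppedVal X (fun ω' => τ m ω' + 1) ω -
        (μ[stoppedVal X (fun ω' => τ m ω' + 1)|sigmaAt m0 F (τ m) (hτ m)]) ω)
    (G : ℕ → MeasurableSpace Ω)
    (hG : ∀ m, G m = sigmaAt m0 F (τ (m + 1)) (hτ (m + 1))) :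
    Monotone G ∧ (∀ m, G m ≤ m0) ∧
      (∀ m, StronglyMeasurable[G m] (Y m)) ∧
      (∀ m, Integrable (Y m) μ) ∧
      (∀ m, ∀ᵐ ω ∂μ, |Y m ω| ≤ 2 * K) ∧
      (∀ m, μ[Y (m + 1)|G m] =ᵐ[μ] 0) := by
  have hK0 : 0 ≤ K := by
    obtain ⟨ω, hω⟩ := (hbdd 0).exists
    exact (abs_nonneg _).trans hω
  have hτ' : ∀ m n : ℕ, MeasurableSet[F n] {ω | (fun ω' => τ m ω' + 1) ω = (n : ℕ∞)} :=
    fun m => hτ_add_one F (τ m) (hτ m)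
  have hle1 : ∀ m ω, τ m ω + 1 ≤ τ (m + 1) ω := by
    intro m ω
    rcases hincr m ω with h | ⟨h1, h2⟩
    · exact Order.add_one_le_of_lt h
    · rw [h1, h2]; simp
  have hlem : ∀ m ω, τ m ω ≤ τ (m + 1) ω := fun m ω => le_self_add.trans (hle1 m ω)
  have hZbdd : ∀ m, ∀ᵐ ω ∂μ, |stoppedVal X (fun ω' => τ m ω' + 1) ω| ≤ K := by
    intro m
    filter_upwards [ae_all_iff.2 hbdd] with ω hω
    unfold stoppedVal
    split_ifs with h
    · exact hω _
    · simpa using hK0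
  have hZmeas : ∀ m, Measurable[sigmaAt m0 F (fun ω' => τ m ω' + 1) (hτ' m)]
      (stoppedVal X fun ω' => τ m ω' + 1) :=
    fun m => measurable_stoppedVal F X hadapt _ (hτ' m)
  have hZint : ∀ m, Integrable (stoppedVal X fun ω' => τ m ω' + 1) μ := by
    intro m
    refine ⟨((hZmeas m).mono (sigmaAt_le F _ _) le_rfl).aestronglyMeasurable, ?_⟩
    exact HasFiniteIntegral.of_bounded (C := K) (by simpa [Real.norm_eq_abs] using hZbdd m)
  have hCbdd : ∀ m, ∀ᵐ ω ∂μ,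
      |(μ[stoppedVal X (fun ω' => τ m ω' + 1)|sigmaAt m0 F (τ m) (hτ m)]) ω| ≤ K := by
    intro m
    have h := ae_bdd_condExp_of_ae_bdd (R := K.toNNReal) (m := sigmaAt m0 F (τ m) (hτ m))
      (f := stoppedVal X fun ω' => τ m ω' + 1)
      (by simpa [Real.coe_toNNReal K hK0] using hZbdd m)
    simpa [Real.coe_toNNReal K hK0] using h
  refine ⟨?_, ?_, ?_, ?_, ?_, ?_⟩
  · refine monotone_nat_of_le_succ fun m => ?_
    rw [hG m, hG (m + 1)]
    exact sigmaAt_mono F _ _ (hlem (m + 1))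
  · intro m; rw [hG m]; exact sigmaAt_le F _ _
  · intro m
    rw [hY m, hG m]
    refine StronglyMeasurable.sub ?_ ?_
    · exact ((hZmeas m).mono (sigmaAt_mono F _ _ (hle1 m)) le_rfl).stronglyMeasurable
    · exact stronglyMeasurable_condExp.mono (sigmaAt_mono F _ _ (hlem m))
  · intro m
    rw [hY m]
    exact (hZint m).sub integrable_condExp
  · intro m
    rw [hY m]
    filter_upwards [hZbdd m, hCbdd m] with ω h1 h2
    calc |stoppedVal X (fun ω' => τ m ω' + 1) ω -
          (μ[stoppedVal X (fun ω' => τ m ω' + 1)|sigmaAt m0 F (τ m) (hτ m)]) ω|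
        ≤ |stoppedVal X (fun ω' => τ m ω' + 1) ω| +
          |(μ[stoppedVal X (fun ω' => τ m ω' + 1)|sigmaAt m0 F (τ m) (hτ m)]) ω| :=
          abs_sub _ _
      _ ≤ 2 * K := by linarith
  · intro m
    rw [hY (m + 1), hG m]
    set Z := stoppedVal X fun ω' => τ (m + 1) ω' + 1 with hZ
    set 𝒢 := sigmaAt m0 F (τ (m + 1)) (hτ (m + 1)) with h𝒢
    have hfun : (fun ω => Z ω - (μ[Z|𝒢]) ω) = Z - μ[Z|𝒢] := rfl
    rw [hfun]
    have h1 : μ[Z - μ[Z|𝒢]|𝒢] =ᵐ[μ] μ[Z|𝒢] - μ[μ[Z|𝒢]|𝒢] :=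
      condExp_sub (hZint (m + 1)) integrable_condExp 𝒢
    have h2 : μ[μ[Z|𝒢]|𝒢] =ᵐ[μ] μ[Z|𝒢] :=
      condExp_condExp_of_le le_rfl (sigmaAt_le F _ _)
    filter_upwards [h1, h2] with ω hω1 hω2
    simp only [Pi.sub_apply, Pi.zero_apply] at *
    rw [hω1, hω2, sub_self]
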